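/- Let p > 3 be a prime and K a finite field with p² elements. Fix δ ∈ K with δ ≠ 0 and δ^p = −δ, let s ∈ K satisfy s^p = s, set C₂(s) = 9(1 + sδ), and let E_{2,s} : y² = x³ + 2(C₂(s) − 24)x − 8(C₂(s) − 16) over K. Fix i ∈ K with i² = −2. If (x, y) is an affine point of E_{2,s}(K) with x ≠ 4, then x^p ≠ 4 and the pair (X, Y) with X = −x^p/2 − C₂(s)^p/(x^p − 4) and Y = (y^p/i)·(−1/2 + C₂(s)^p/(x^p − 4)²) again satisfies Y² = X³ + 2(C₂(s) − 24)X − 8(C₂(s) − 16); that is, the map ψ sends affine points of E_{2,s} with x ≠ 4 to affine points of E_{2,s}. -/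

import Mathlib

/-- The map `ψ` sends affine points of `E_{2,s}` with `x ≠ 4` to affine points of
`E_{2,s}`: if `(x, y)` lies on the curve and `x ≠ 4`, then `x^p ≠ 4` and the image pair
`(X, Y)` again satisfies the curve equation. -/
theorem degree2_endomorphism_well_defined
    (p : ℕ) (hp : p.Prime) (hp3 : 3 < p)
    (K : Type*) [Field K] [Fintype K] (hK : Fintype.card K = p ^ 2)
    (δ : K) (hδ : δ ≠ 0) (hδp : δ ^ p = -δ)
    (s : K) (hs : s ^ p = s)
    (i : K) (hi : i ^ 2 = -2)
    (x y : K)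
    (hxy : y ^ 2 = x ^ 3 + 2 * (9 * (1 + s * δ) - 24) * x - 8 * (9 * (1 + s * δ) - 16))
    (hx : x ≠ 4)
    (X Y : K)
    (hX : X = -x ^ p / 2 - (9 * (1 + s * δ)) ^ p / (x ^ p - 4))
    (hY : Y = y ^ p / i * (-1 / 2 + (9 * (1 + s * δ)) ^ p / (x ^ p - 4) ^ 2)) :
    x ^ p ≠ 4 ∧
      Y ^ 2 = X ^ 3 + 2 * (9 * (1 + s * δ) - 24) * X - 8 * (9 * (1 + s * δ) - 16) := by
  -- Characteristic of K is p
  haveI hrc : CharP K (ringChar K) := ringChar.charP K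
  obtain ⟨n, hqp, hcard⟩ := FiniteField.card K (ringChar K)
  have hqeq : ringChar K = p := by
    have h1 : ringChar K ∣ p ^ 2 := by
      rw [← hK, hcard]; exact dvd_pow_self _ n.pos.ne'
    exact (Nat.prime_dvd_prime_iff_eq hqp hp).mp (hqp.dvd_of_dvd_pow h1)
  haveI hcp : CharP K p := hqeq ▸ hrc
  haveI : Fact p.Prime := ⟨hp⟩
  have h2 : (2 : K) ≠ 0 := by
    intro h
    have hd : p ∣ 2 := (CharP.cast_eq_zero_iff K p 2).mp (by exact_mod_cast h)
    have := Nat.le_of_dvd (by norm_num) hd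
    omega
  have hi0 : i ≠ 0 := by
    intro h
    apply h2
    have h0 : (0 : K) = -2 := by simpa [h] using hi
    linear_combination h0
  have h4p : (4 : K) ^ p = 4 := by
    have := map_natCast (frobenius K p) 4
    simpa [frobenius_def] using this
  -- x^p ≠ 4
  have hsub : (x - 4) ^ p = x ^ p - 4 := by rw [sub_pow_char, h4p]
  have hx4 : x ^ p - 4 ≠ 0 := by
    intro h
    have h0 : (x - 4) ^ p = 0 := by rw [hsub, h]
    exact hx (sub_eq_zero.mp (pow_eq_zero_iff hp.ne_zero |>.mp h0))
  have hx4' : x ^ p ≠ 4 := fun h => hx4 (by rw [h]; ring)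
  refine ⟨hx4', ?_⟩
  -- Frobenius of curve coefficient
  have h9 : (9 : K) ^ p = 9 := by
    have := map_natCast (frobenius K p) 9; simpa [frobenius_def] using this
  have hC : (9 * (1 + s * δ)) ^ p = 9 * (1 - s * δ) := by
    rw [mul_pow, h9, add_pow_char, one_pow, mul_pow, hs, hδp]; ring
  -- Frobenius of the curve equation
  have h2p : (2 : K) ^ p = 2 := by
    have := map_natCast (frobenius K p) 2; simpa [frobenius_def] using this
  have h8p : (8 : K) ^ p = 8 := by
    have := map_natCast (frobenius K p) 8; simpa [frobenius_def] using this
  have h16p : (16 : K) ^ p = 16 := by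
    have := map_natCast (frobenius K p) 16; simpa [frobenius_def] using this
  have h24p : (24 : K) ^ p = 24 := by
    have := map_natCast (frobenius K p) 24; simpa [frobenius_def] using this
  have hxyp : (y ^ p) ^ 2 = (x ^ p) ^ 3 + 2 * ((9 * (1 + s * δ)) ^ p - 24) * x ^ p
      - 8 * ((9 * (1 + s * δ)) ^ p - 16) := by
    have h := congrArg (frobenius K p) hxy
    simp only [map_pow, map_add, map_sub, map_mul, map_ofNat, map_one, frobenius_def] at h
    rw [hs, hδp] at h
    rw [hC]
    linear_combination h
  -- Key relation: C = 18 - C^p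
  have hCC : 9 * (1 + s * δ) = 18 - (9 * (1 + s * δ)) ^ p := by rw [hC]; ring
  set u := x ^ p with hu
  set v := y ^ p with hv
  set D := (9 * (1 + s * δ)) ^ p with hD
  -- Compute Y^2 using i^2 = -2 and the Frobenius curve equation
  have hY2 : Y ^ 2 = (u ^ 3 + 2 * (D - 24) * u - 8 * (D - 16))
      * (-1 / 2 + D / (u - 4) ^ 2) ^ 2 / (-2) := by
    rw [hY, mul_pow, div_pow, hi, hxyp]
    ring
  rw [hY2, hX, hCC]
  field_simp
  ring
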